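/- The minimum rank distance of the [n,k] Gabidulin code equals n − k + 1 when m ≥ n; i.e., the Gabidulin code is maximum rank distance (MRD), attaining the rank-metric Singleton bound |C| = q^{m(n−d+1)} with d = n−k+1. -/

import Mathlib

open Polynomial in
/-- The `K`-linear map on `L` given by the linearized (q-)polynomial with
coefficients `u`. -/
private noncomputable def qlinGab {K L : Type*} [Field K] [Field L] [Fintype K]
    [Algebra K L] {k : ℕ} (u : Fin k → L) : L →ₗ[K] L where
  toFun x := ∑ i : Fin k, u i * x ^ Fintype.card K ^ (i : ℕ)
  map_add' x y := by
    obtain ⟨p, hp⟩ := CharP.exists K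
    haveI := hp
    haveI : Fact p.Prime := ⟨CharP.char_is_prime K p⟩
    haveI : CharP L p := charP_of_injective_algebraMap (algebraMap K L).injective p
    haveI : ExpChar L p := .prime Fact.out
    obtain ⟨e, -, hqe⟩ := FiniteField.card K p
    rw [← Finset.sum_add_distrib]
    refine Finset.sum_congr rfl fun i _ => ?_
    rw [hqe, ← pow_mul, add_pow_char_pow, mul_add]
  map_smul' a x := by
    simp only [RingHom.id_apply, Finset.smul_sum]
    refine Finset.sum_congr rfl fun i _ => ?_
    rw [Algebra.smul_def, Algebra.smul_def, mul_pow, ← map_pow, FiniteField.pow_card_pow]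
    ring

private theorem qlinGab_apply {K L : Type*} [Field K] [Field L] [Fintype K]
    [Algebra K L] {k : ℕ} (u : Fin k → L) (x : L) :
    qlinGab (K := K) u x = ∑ i : Fin k, u i * x ^ Fintype.card K ^ (i : ℕ) := rfl

open Polynomial in
/-- The kernel of a nonzero linearized polynomial of q-degree `< k` has
`K`-dimension at most `k - 1`. -/
private theorem qlinGab_ker_le {K L : Type*} [Field K] [Field L] [Fintype K] [Fintype L]
    [Algebra K L] {k : ℕ} {u : Fin k → L} (hu : u ≠ 0) :
    Module.finrank K (LinearMap.ker (qlinGab (K := K) u)) ≤ k - 1 := by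
  classical
  set q := Fintype.card K with hq
  have hq1 : 1 < q := Fintype.one_lt_card
  obtain ⟨j, hj⟩ := Function.ne_iff.mp hu
  set P : Polynomial L := ∑ i : Fin k, Polynomial.C (u i) * Polynomial.X ^ (q ^ (i : ℕ))
    with hP
  have hinj : Function.Injective (fun i : Fin k => q ^ (i : ℕ)) := by
    intro a b hab
    exact Fin.ext (Nat.pow_right_injective hq1 hab)
  have hPcoeff : P.coeff (q ^ (j : ℕ)) = u j := by
    rw [hP, Polynomial.finset_sum_coeff]
    rw [Finset.sum_eq_single j]
    · simp [Polynomial.coeff_C_mul, Polynomial.coeff_X_pow]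
    · intro i _ hij
      have hne : q ^ (i : ℕ) ≠ q ^ (j : ℕ) := fun h => hij (hinj h)
      rw [Polynomial.coeff_C_mul, Polynomial.coeff_X_pow, if_neg (fun h => hne h.symm), mul_zero]
    · simp
  have hPne : P ≠ 0 := by
    intro h0
    rw [h0, Polynomial.coeff_zero] at hPcoeff
    have hj' : u j ≠ 0 := by simpa using hj
    exact hj' hPcoeff.symm
  have hPdeg : P.natDegree ≤ q ^ (k - 1) := by
    refine Polynomial.natDegree_sum_le_of_forall_le _ _ fun i _ => ?_
    refine le_trans (Polynomial.natDegree_C_mul_le _ _) ?_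
    rw [Polynomial.natDegree_X_pow]
    exact Nat.pow_le_pow_right (by omega) (by omega)
  have heval : ∀ x : L, P.eval x = qlinGab (K := K) u x := by
    intro x
    rw [qlinGab_apply, hP, Polynomial.eval_finset_sum]
    simp
    rfl
  have hsub : ∀ x : L, x ∈ LinearMap.ker (qlinGab (K := K) u) → x ∈ P.roots.toFinset := by
    intro x hx
    rw [Multiset.mem_toFinset, Polynomial.mem_roots hPne]
    rw [LinearMap.mem_ker] at hx
    rw [Polynomial.IsRoot, heval, hx]
  have hcard : Fintype.card (LinearMap.ker (qlinGab (K := K) u)) ≤ q ^ (k - 1) := by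
    calc Fintype.card (LinearMap.ker (qlinGab (K := K) u))
        ≤ Fintype.card (P.roots.toFinset : Finset L) := by
          refine Fintype.card_le_of_injective
            (fun x => ⟨x.1, hsub x.1 x.2⟩) ?_
          intro a b h
          have h2 := Subtype.ext_iff.mp h
          exact Subtype.ext h2
      _ = P.roots.toFinset.card := Fintype.card_coe _
      _ ≤ Multiset.card P.roots := Multiset.toFinset_card_le _
      _ ≤ P.natDegree := Polynomial.card_roots' P
      _ ≤ q ^ (k - 1) := hPdeg
  have hcard' : q ^ Module.finrank K (LinearMap.ker (qlinGab (K := K) u)) ≤ q ^ (k - 1) := by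
    rw [← Module.card_eq_pow_finrank (K := K)]
    exact hcard
  exact (Nat.pow_le_pow_iff_right hq1).mp hcard'

/-- The minimum rank distance of the `[n, k]` Gabidulin code equals `n - k + 1`
when `m ≥ n` (the minimum, over nonzero messages `u`, of the rank of the codeword
`u ᵥ* G` is exactly `n - k + 1`), and the code attains the rank-metric Singleton
bound: it has exactly `q ^ (m * (n - d + 1)) = q ^ (m * k)` codewords. -/
theorem gabidulin_is_MRD {K L : Type*} [Field K] [Field L]
    [Fintype K] [Fintype L] [Algebra K L] {n m k : ℕ}
    (hm : Module.finrank K L = m) (hn : n ≤ m) (hk0 : 0 < k) (hk : k ≤ n)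
    (g : Fin n → L) (hg : LinearIndependent K g)
    (G : Matrix (Fin k) (Fin n) L)
    (hG : ∀ (i : Fin k) (j : Fin n), G i j = g j ^ Fintype.card K ^ (i : ℕ)) :
    IsLeast {r : ℕ | ∃ u : Fin k → L, u ≠ 0 ∧
        r = Module.finrank K (Submodule.span K (Set.range (Matrix.vecMul u G)))}
      (n - k + 1) ∧
    Set.ncard {c : Fin n → L | ∃ u : Fin k → L, c = Matrix.vecMul u G}
      = Fintype.card K ^ (m * k) := by
  classical
  haveI : Module.Finite K L := (Module.finite_iff_finite (R := K) (M := L)).mpr inferInstance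
  set q := Fintype.card K with hq
  set W : Submodule K L := Submodule.span K (Set.range g) with hW
  have hWrank : Module.finrank K W = n := by
    rw [hW, finrank_span_eq_card hg, Fintype.card_fin]
  -- the codeword is the image of `g` under the linearized polynomial map
  have hc : ∀ (u : Fin k → L) (j : Fin n),
      Matrix.vecMul u G j = qlinGab (K := K) u (g j) := by
    intro u j
    rw [qlinGab_apply]
    simp only [Matrix.vecMul, dotProduct]
    exact Finset.sum_congr rfl fun i _ => by rw [hG]
  have hcfun : ∀ u : Fin k → L, Matrix.vecMul u G = (qlinGab (K := K) u) ∘ g :=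
    fun u => funext (hc u)
  have hspan : ∀ u : Fin k → L,
      Submodule.span K (Set.range (Matrix.vecMul u G)) = Submodule.map (qlinGab (K := K) u) W := by
    intro u
    rw [hcfun u, Set.range_comp, hW, Submodule.map_span]
  -- rank-nullity for the restriction to W
  have hrank : ∀ u : Fin k → L,
      Module.finrank K (Submodule.map (qlinGab (K := K) u) W)
        + Module.finrank K (LinearMap.ker ((qlinGab (K := K) u).domRestrict W)) = n := by
    intro u
    have h := LinearMap.finrank_range_add_finrank_ker ((qlinGab (K := K) u).domRestrict W)
    rw [LinearMap.range_domRestrict, hWrank] at h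
    exact h
  -- kernel of the restriction embeds in the kernel of the whole map
  have hkerle : ∀ u : Fin k → L, u ≠ 0 →
      Module.finrank K (LinearMap.ker ((qlinGab (K := K) u).domRestrict W)) ≤ k - 1 := by
    intro u hu
    refine le_trans ?_ (qlinGab_ker_le (K := K) hu)
    refine LinearMap.finrank_le_finrank_of_injective
      (f := { toFun := fun x : LinearMap.ker ((qlinGab (K := K) u).domRestrict W) =>
                (⟨(x.1 : L), by
                    have := x.2
                    rw [LinearMap.mem_ker] at this ⊢
                    exact this⟩ : LinearMap.ker (qlinGab (K := K) u))
              map_add' := fun a b => rfl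
              map_smul' := fun c a => rfl }) ?_
    intro a b h
    have h2 := Subtype.ext_iff.mp h
    exact Subtype.ext (Subtype.ext h2)
  -- lower bound for all nonzero codewords
  have hlb : ∀ r ∈ {r : ℕ | ∃ u : Fin k → L, u ≠ 0 ∧
      r = Module.finrank K (Submodule.span K (Set.range (Matrix.vecMul u G)))},
      n - k + 1 ≤ r := by
    rintro r ⟨u, hu, rfl⟩
    have h1 := hrank u
    have h2 := hkerle u hu
    rw [hspan u]
    omega
  -- existence of a codeword of rank exactly n - k + 1
  have hkn : k - 1 ≤ n := by omega
  obtain ⟨u₀, hu₀mem, hu₀⟩ :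
      ∃ u₀ : Fin k → L, u₀ ∈ LinearMap.ker
        (Matrix.vecMulLinear (G.submatrix id (Fin.castLE hkn))) ∧ u₀ ≠ 0 := by
    have hni : ¬ Function.Injective
        (Matrix.vecMulLinear (G.submatrix id (Fin.castLE hkn))) := by
      intro hinj
      have := LinearMap.finrank_le_finrank_of_injective hinj
      simp only [Module.finrank_fin_fun] at this
      omega
    rw [← LinearMap.ker_eq_bot] at hni
    exact Submodule.exists_mem_ne_zero_of_ne_bot hni
  have hvanish : ∀ j : Fin (k - 1), qlinGab (K := K) u₀ (g (Fin.castLE hkn j)) = 0 := by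
    intro j
    rw [← hc]
    rw [LinearMap.mem_ker] at hu₀mem
    have := congrFun hu₀mem j
    simpa [Matrix.vecMulLinear, Matrix.vecMul, dotProduct, Matrix.submatrix] using this
  -- the kernel of the restriction has dimension at least k - 1
  have hgmem : ∀ j : Fin (k - 1), g (Fin.castLE hkn j) ∈ W :=
    fun j => Submodule.subset_span (Set.mem_range_self _)
  have hklb : k - 1 ≤ Module.finrank K
      (LinearMap.ker ((qlinGab (K := K) u₀).domRestrict W)) := by
    have hli : LinearIndependent K (fun j : Fin (k - 1) =>
        (⟨⟨g (Fin.castLE hkn j), hgmem j⟩, by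
            rw [LinearMap.mem_ker, LinearMap.domRestrict_apply]
            exact hvanish j⟩ :
          LinearMap.ker ((qlinGab (K := K) u₀).domRestrict W))) := by
      have hgc : LinearIndependent K (g ∘ Fin.castLE hkn) :=
        hg.comp _ (Fin.castLE_injective hkn)
      refine LinearIndependent.of_comp
        (W.subtype.comp (LinearMap.ker ((qlinGab (K := K) u₀).domRestrict W)).subtype) ?_
      exact hgc
    have := hli.fintype_card_le_finrank
    rwa [Fintype.card_fin] at this
  have hmem : (n - k + 1) ∈ {r : ℕ | ∃ u : Fin k → L, u ≠ 0 ∧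
      r = Module.finrank K (Submodule.span K (Set.range (Matrix.vecMul u G)))} := by
    refine ⟨u₀, hu₀, ?_⟩
    have h1 := hrank u₀
    have h2 := hkerle u₀ hu₀
    rw [hspan u₀]
    omega
  refine ⟨⟨hmem, hlb⟩, ?_⟩
  -- cardinality of the code
  have hinj : Function.Injective (fun u : Fin k → L => Matrix.vecMul u G) := by
    intro u v huv
    by_contra hne
    have huvne : u - v ≠ 0 := sub_ne_zero.mpr hne
    have hz : ∀ j : Fin n, qlinGab (K := K) (u - v) (g j) = 0 := by
      intro j
      rw [← hc]
      rw [Matrix.sub_vecMul]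
      have huv' : Matrix.vecMul u G = Matrix.vecMul v G := huv
      rw [huv']
      simp
    have hWle : W ≤ LinearMap.ker (qlinGab (K := K) (u - v)) := by
      rw [hW, Submodule.span_le]
      rintro x ⟨j, rfl⟩
      rw [SetLike.mem_coe, LinearMap.mem_ker]
      exact hz j
    have := Submodule.finrank_mono hWle
    rw [hWrank] at this
    have := qlinGab_ker_le (K := K) huvne
    omega
  have hset : {c : Fin n → L | ∃ u : Fin k → L, c = Matrix.vecMul u G}
      = Set.range (fun u : Fin k → L => Matrix.vecMul u G) := by
    ext c
    simp [Set.range, eq_comm]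
  rw [hset, ← Set.image_univ, Set.ncard_image_of_injective _ hinj, Set.ncard_univ]
  rw [Nat.card_eq_fintype_card, Fintype.card_fun]
  rw [Module.card_eq_pow_finrank (K := K) (V := L), hm, Fintype.card_fin, ← pow_mul]
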